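/- Let φ : 𝒫_c → 𝒫_c in M_n(ℂ) preserve the transition probability, and suppose φ extends to a trace-preserving Jordan *-homomorphism Φ : M_n(ℂ) → M_n(ℂ). If φ is surjective, then Φ is a *-automorphism or a *-anti-automorphism of M_n(ℂ). -/

import Mathlib

open Matrix

/-- `𝒫_c`: projections of trace `c` in `M_n(ℂ)`. -/
def MemGrassmann (n c : ℕ) (P : Matrix (Fin n) (Fin n) ℂ) : Prop :=
  P.IsHermitian ∧ P * P = P ∧ P.trace = (c : ℂ)

namespace Stmt16Aux

variable {n : ℕ}

lemma double_cancel {x y : Matrix (Fin n) (Fin n) ℂ} (h : x + x = y + y) : x = y := by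
  have h2 : (2:ℂ) • x = (2:ℂ) • y := by rw [two_smul, two_smul]; exact h
  exact smul_right_injective _ two_ne_zero h2

lemma self_neg_zero {x : Matrix (Fin n) (Fin n) ℂ} (h : x = -x) : x = 0 := by
  have h0 : x + x = 0 + 0 := by nth_rewrite 2 [h]; simp
  exact double_cancel h0

lemma trace_mul_std (A : Matrix (Fin n) (Fin n) ℂ) (i j : Fin n) :
    (A * Matrix.single j i (1:ℂ)).trace = A i j := by
  simp [Matrix.trace, Matrix.diag, Matrix.mul_apply, Matrix.single,
    ite_and, Finset.sum_ite_eq, Finset.sum_ite_eq']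

/-- `M_n(ℂ)` is a prime ring. -/
lemma matrix_prime {a b : Matrix (Fin n) (Fin n) ℂ}
    (h : ∀ z, a * z * b = 0) : a = 0 ∨ b = 0 := by
  by_cases ha : a = 0
  · exact Or.inl ha
  · right
    have hex : ∃ i j, a i j ≠ 0 := by
      by_contra hc; push_neg at hc
      exact ha (by ext i j; simpa using hc i j)
    obtain ⟨i, j, hij⟩ := hex
    ext k l
    have h2 := congrFun (congrFun (h (Matrix.single j k 1)) i) l
    have h3 : (a * Matrix.single j k (1:ℂ) * b) i l = a i j * b k l := by
      simp [Matrix.mul_apply, Matrix.single, ite_and, Finset.sum_ite_eq,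
        Finset.sum_ite_eq', Finset.mul_sum, Finset.sum_mul, mul_comm, mul_assoc, mul_left_comm]
    rw [h3] at h2
    simpa [hij] using h2

section Jordan

variable (Φ : Matrix (Fin n) (Fin n) ℂ →ₗ[ℂ] Matrix (Fin n) (Fin n) ℂ)
  (hj : ∀ A B, Φ (A * B + B * A) = Φ A * Φ B + Φ B * Φ A)
include hj

lemma hsq (A : Matrix (Fin n) (Fin n) ℂ) : Φ (A * A) = Φ A * Φ A := by
  have h := hj A A
  rw [map_add] at h
  exact double_cancel h

lemma haba (A B : Matrix (Fin n) (Fin n) ℂ) : Φ (A * B * A) = Φ A * Φ B * Φ A := by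
  have key : A * B * A + A * B * A
      = (A * (A * B + B * A) + (A * B + B * A) * A) - ((A * A) * B + B * (A * A)) := by
    noncomm_ring
  have h1 := hj A (A * B + B * A)
  have h2 := hj (A * A) B
  have h3 := hj A B
  have h4 := hsq Φ hj A
  apply double_cancel
  rw [← map_add, key, map_sub, h1, h2, h3, h4]
  noncomm_ring

lemma habc (A B C : Matrix (Fin n) (Fin n) ℂ) :
    Φ (A * B * C + C * B * A) = Φ A * Φ B * Φ C + Φ C * Φ B * Φ A := by
  have key : A * B * C + C * B * A
      = (A + C) * B * (A + C) - A * B * A - C * B * C := by noncomm_ring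
  rw [key, map_sub, map_sub, haba Φ hj, haba Φ hj, haba Φ hj, map_add]
  noncomm_ring

omit hj in
lemma ring_aux {A B p q z : Matrix (Fin n) (Fin n) ℂ}
    (hAB : A*z*B + B*z*A = p*z*q + q*z*p) (hsum : A + B = p + q) :
    (A - p) * z * (A - q) + (A - q) * z * (A - p) = 0 := by
  have hB : B = p + q - A := eq_sub_of_add_eq' hsum
  rw [hB] at hAB
  have expand : (A - p) * z * (A - q) + (A - q) * z * (A - p)
      = (p*z*q + q*z*p) - (A*z*(p+q-A) + (p+q-A)*z*A) := by noncomm_ring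
  rw [expand, hAB, sub_self]

lemma key_rel (hs : Function.Surjective Φ) (a b z : Matrix (Fin n) (Fin n) ℂ) :
    (Φ (a*b) - Φ a * Φ b) * z * (Φ (a*b) - Φ b * Φ a)
      + (Φ (a*b) - Φ b * Φ a) * z * (Φ (a*b) - Φ a * Φ b) = 0 := by
  obtain ⟨x, rfl⟩ := hs z
  have f1 : Φ ((a*b)*x*(b*a)) = (Φ a * Φ b) * Φ x * (Φ b * Φ a) := by
    have e : (a*b)*x*(b*a) = a*(b*x*b)*a := by noncomm_ring
    rw [e, haba Φ hj, haba Φ hj]; noncomm_ring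
  have f2 : Φ ((b*a)*x*(a*b)) = (Φ b * Φ a) * Φ x * (Φ a * Φ b) := by
    have e : (b*a)*x*(a*b) = b*(a*x*a)*b := by noncomm_ring
    rw [e, haba Φ hj, haba Φ hj]; noncomm_ring
  have f3 : Φ ((a*b)*x*(b*a) + (b*a)*x*(a*b))
      = Φ (a*b) * Φ x * Φ (b*a) + Φ (b*a) * Φ x * Φ (a*b) := habc Φ hj _ _ _
  have hAB : Φ (a*b) * Φ x * Φ (b*a) + Φ (b*a) * Φ x * Φ (a*b)
      = (Φ a * Φ b) * Φ x * (Φ b * Φ a) + (Φ b * Φ a) * Φ x * (Φ a * Φ b) := by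
    rw [← f1, ← f2, ← map_add, f3]
  have hsum : Φ (a*b) + Φ (b*a) = Φ a * Φ b + Φ b * Φ a := by
    rw [← map_add]; exact hj a b
  exact ring_aux hAB hsum

end Jordan

/-- In a prime ring, `SzT + TzS = 0` for all `z` forces `S = 0` or `T = 0`. -/
lemma perpair {S T : Matrix (Fin n) (Fin n) ℂ}
    (h : ∀ z, S * z * T + T * z * S = 0) : S = 0 ∨ T = 0 := by
  have h' : ∀ z, S * z * T = -(T * z * S) := fun z => eq_neg_of_add_eq_zero_left (h z)
  have key : ∀ u v, T * u * S * v * S = 0 := by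
    intro u v
    have e1 : S * (u * S * v) * T = -(T * (u * S * v) * S) := h' _
    have e2 : S * u * S * v * T = T * u * S * v * S := by
      have c1 : S * u * S * v * T = S * u * (S * v * T) := by noncomm_ring
      rw [c1, h' v]
      have c2 : S * u * -(T * v * S) = -(S * u * T) * v * S := by noncomm_ring
      rw [c2, h' u]
      noncomm_ring
    have e3 : S * (u * S * v) * T = S * u * S * v * T := by noncomm_ring
    have e4 : T * (u * S * v) * S = T * u * S * v * S := by noncomm_ring
    rw [e3, e2, e4] at e1
    exact self_neg_zero e1
  by_cases hS : S = 0
  · exact Or.inl hS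
  · refine Or.inr ?_
    have hTuS : ∀ u, T * u * S = 0 := by
      intro u
      rcases matrix_prime (a := T*u*S) (b := S) (fun v => key u v) with h0 | h0
      · exact h0
      · exact absurd h0 hS
    rcases matrix_prime (a := T) (b := S) hTuS with h0 | h0
    · exact h0
    · exact absurd h0 hS

end Stmt16Aux

open Stmt16Aux in
/-- If a surjective transition probability preserving map `φ` on `𝒫_c` extends to a
trace-preserving Jordan *-homomorphism `Φ` of `M_n(ℂ)`, then `Φ` is a *-automorphism or a
*-anti-automorphism. -/
theorem stmt16 {n c : ℕ} (hc0 : 0 < c) (hcn : c < n) (hhalf : 2 * c ≠ n)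
    (φ : Matrix (Fin n) (Fin n) ℂ → Matrix (Fin n) (Fin n) ℂ)
    (hmap : ∀ P, MemGrassmann n c P → MemGrassmann n c (φ P))
    (hpres : ∀ P Q, MemGrassmann n c P → MemGrassmann n c Q →
      (φ P * φ Q).trace = (P * Q).trace)
    (hsurj : ∀ Q, MemGrassmann n c Q → ∃ P, MemGrassmann n c P ∧ φ P = Q)
    (Φ : Matrix (Fin n) (Fin n) ℂ →ₗ[ℂ] Matrix (Fin n) (Fin n) ℂ)
    (hjordan : ∀ A B, Φ (A * B + B * A) = Φ A * Φ B + Φ B * Φ A)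
    (hstar : ∀ A : Matrix (Fin n) (Fin n) ℂ, Φ Aᴴ = (Φ A)ᴴ)
    (htrace : ∀ A : Matrix (Fin n) (Fin n) ℂ, (Φ A).trace = A.trace)
    (hext : ∀ P, MemGrassmann n c P → Φ P = φ P) :
    Function.Bijective Φ ∧
      ((∀ A B, Φ (A * B) = Φ A * Φ B) ∨ (∀ A B, Φ (A * B) = Φ B * Φ A)) := by
  -- Step 1: `Φ` preserves the Hilbert–Schmidt pairing, hence is injective, hence bijective.
  have htr2 : ∀ A B : Matrix (Fin n) (Fin n) ℂ, (Φ A * Φ B).trace = (A * B).trace := by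
    intro A B
    have h := htrace (A * B + B * A)
    rw [hjordan] at h
    rw [trace_add, trace_add, trace_mul_comm (Φ B) (Φ A), trace_mul_comm B A] at h
    have h2 : (2:ℂ) * (Φ A * Φ B).trace = (2:ℂ) * (A * B).trace := by
      rw [two_mul, two_mul]; exact h
    exact mul_left_cancel₀ two_ne_zero h2
  have hinj : Function.Injective Φ := by
    rw [← LinearMap.ker_eq_bot, LinearMap.ker_eq_bot']
    intro A hA
    ext i j
    have h := htr2 A (Matrix.single j i 1)
    rw [hA, zero_mul, trace_zero, trace_mul_std] at h
    simpa using h.symm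
  have hbij : Function.Bijective Φ := ⟨hinj, LinearMap.injective_iff_surjective.mp hinj⟩
  refine ⟨hbij, ?_⟩
  -- Step 2: Herstein's theorem: a surjective Jordan homomorphism onto a prime ring is
  -- multiplicative or anti-multiplicative.
  set S : Matrix (Fin n) (Fin n) ℂ → Matrix (Fin n) (Fin n) ℂ → Matrix (Fin n) (Fin n) ℂ :=
    fun a b => Φ (a*b) - Φ a * Φ b with hSdef
  set T : Matrix (Fin n) (Fin n) ℂ → Matrix (Fin n) (Fin n) ℂ → Matrix (Fin n) (Fin n) ℂ :=
    fun a b => Φ (a*b) - Φ b * Φ a with hTdef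
  have hdis : ∀ a b, S a b = 0 ∨ T a b = 0 := by
    intro a b
    exact perpair (fun z => key_rel Φ hjordan hbij.2 a b z)
  have hSadd2 : ∀ a b b', S a (b + b') = S a b + S a b' := by
    intro a b b'
    simp only [hSdef, mul_add, map_add]
    noncomm_ring
  have hTadd2 : ∀ a b b', T a (b + b') = T a b + T a b' := by
    intro a b b'
    simp only [hTdef, mul_add, map_add]
    noncomm_ring
  have hSadd1 : ∀ a a' b, S (a + a') b = S a b + S a' b := by
    intro a a' b
    simp only [hSdef, add_mul, map_add]
    noncomm_ring
  have hTadd1 : ∀ a a' b, T (a + a') b = T a b + T a' b := by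
    intro a a' b
    simp only [hTdef, add_mul, map_add]
    noncomm_ring
  have lvl1 : ∀ a, (∀ b, S a b = 0) ∨ (∀ b, T a b = 0) := by
    intro a
    by_cases hS : ∀ b, S a b = 0
    · exact Or.inl hS
    · push_neg at hS
      obtain ⟨b0, hb0⟩ := hS
      have hT0 : T a b0 = 0 := (hdis a b0).resolve_left hb0
      refine Or.inr fun b => ?_
      by_contra hT
      have hSb : S a b = 0 := (hdis a b).resolve_right hT
      rcases hdis a (b + b0) with h0 | h0
      · rw [hSadd2, hSb, zero_add] at h0
        exact hb0 h0
      · rw [hTadd2, hT0, add_zero] at h0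
        exact hT h0
  by_cases hS : ∀ a b, S a b = 0
  · refine Or.inl fun A B => ?_
    have := hS A B
    simpa [hSdef, sub_eq_zero] using this
  · push_neg at hS
    obtain ⟨a0, b0, hab0⟩ := hS
    have hTa0 : ∀ b, T a0 b = 0 := by
      rcases lvl1 a0 with h0 | h0
      · exact absurd (h0 b0) hab0
      · exact h0
    refine Or.inr fun A B => ?_
    suffices h : T A B = 0 by simpa [hTdef, sub_eq_zero] using h
    by_contra hT
    have hSa : ∀ b, S A b = 0 := by
      rcases lvl1 A with h0 | h0
      · exact h0
      · exact absurd (h0 B) hT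
    rcases lvl1 (A + a0) with h0 | h0
    · have := h0 b0
      rw [hSadd1, hSa b0, zero_add] at this
      exact hab0 this
    · have := h0 B
      rw [hTadd1, hTa0 B, add_zero] at this
      exact hT this
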